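/- Every oriented graph with no directed triangle, no induced TT3, and no induced P⁺(2,1) has chromatic number at most 3, and this bound is attained (directed odd cycles belong to this class and have chromatic number 3). -/

import Mathlib

/-- The underlying simple graph of a digraph given by its arc relation. -/
def underlying {V : Type*} (A : V → V → Prop) : SimpleGraph V where
  Adj x y := x ≠ y ∧ (A x y ∨ A y x)
  symm := by constructor; intro x y h; exact ⟨h.1.symm, h.2.symm⟩
  loopless := by constructor; intro x h; exact h.1 rfl

section Core
set_option linter.unusedSectionVars false
set_option linter.unusedVariables false
variable {V : Type} {A : V → V → Prop}
variable (hopp : ∀ x y, A x y → ¬ A y x)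
variable (hC3 : ¬ ∃ u v w : V, A u v ∧ A v w ∧ A w u)
variable (hTT3 : ¬ ∃ u v w : V, A u v ∧ A v w ∧ A u w)
variable (hP4 : ¬ ∃ a b c d : V, A a b ∧ A b c ∧ A d c ∧
        ¬ (underlying A).Adj a c ∧ ¬ (underlying A).Adj a d ∧
        ¬ (underlying A).Adj b d)





include hopp in
lemma noloop {x : V} (h : A x x) : False := hopp x x h h

include hopp in
lemma arc_ne {x y : V} (h : A x y) : x ≠ y := by rintro rfl; exact noloop hopp h

include hopp in
lemma arc_adj {x y : V} (h : A x y) : (underlying A).Adj x y := ⟨arc_ne hopp h, Or.inl h⟩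

include hopp hC3 hTT3 in
lemma B1 {a b c : V} (h1 : A a b) (h2 : A b c) : ¬ (underlying A).Adj a c := by
  rintro ⟨hne, h | h⟩
  · exact hTT3 ⟨a, b, c, h1, h2, h⟩
  · exact hC3 ⟨a, b, c, h1, h2, h⟩

include hopp hC3 hTT3 in
lemma B1' {a b c : V} (h1 : A a b) (h2 : A b c) : a ≠ c := by
  rintro rfl; exact hopp a b h1 h2

include hTT3 in
lemma B2 {x y z : V} (h1 : A x y) (h2 : A x z) (hne : y ≠ z) : ¬ (underlying A).Adj y z := by
  rintro ⟨-, h | h⟩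
  · exact hTT3 ⟨x, y, z, h1, h, h2⟩
  · exact hTT3 ⟨x, z, y, h2, h, h1⟩

include hTT3 in
lemma B3 {x y z : V} (h1 : A y x) (h2 : A z x) (hne : y ≠ z) : ¬ (underlying A).Adj y z := by
  rintro ⟨-, h | h⟩
  · exact hTT3 ⟨y, z, x, h, h2, h1⟩
  · exact hTT3 ⟨z, y, x, h, h1, h2⟩

include hopp hC3 hTT3 hP4 in
lemma R2 {a b c d : V} (h1 : A a b) (h2 : A b c) (h3 : A d c) (hdb : d ≠ b) :
    (underlying A).Adj a d ∧ a ≠ d := by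
  have hnac : ¬ (underlying A).Adj a c := B1 hopp hC3 hTT3 h1 h2
  have hand : a ≠ d := by
    rintro rfl
    exact hnac ⟨B1' hopp hC3 hTT3 h1 h2, Or.inl h3⟩
  refine ⟨?_, hand⟩
  by_contra hnadj
  exact hP4 ⟨a, b, c, d, h1, h2, h3, hnac, hnadj, B3 hTT3 h2 h3 (Ne.symm hdb)⟩

/-- directed walk relation -/
def Rk (A : V → V → Prop) : ℕ → V → V → Prop
  | 0, r, x => x = r
  | (k+1), r, x => ∃ y, Rk A k r y ∧ A y x

lemma Rk_comp {k j : ℕ} {r u x : V} (h1 : Rk A k r u) (h2 : Rk A j u x) :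
    Rk A (k + j) r x := by
  induction j generalizing x with
  | zero => cases h2; exact h1
  | succ j ih => obtain ⟨y, hy, hyx⟩ := h2; exact ⟨y, ih hy, hyx⟩

include hopp hC3 hTT3 hP4 in
/-- Key lemma (T): two vertices reachable from a common root in the same number
of steps are never joined by an arc. -/
lemma keyT : ∀ (k : ℕ) (r x e : V), Rk A k r x → Rk A k r e → A x e → False := by
  intro k
  induction k with
  | zero => rintro r x e rfl rfl h; exact noloop hopp h
  | succ k ih =>
    rintro r x e ⟨a, ha, hax⟩ ⟨b, hb, hbe⟩ hxe
    by_cases hab : a = b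
    · subst hab; exact hTT3 ⟨a, x, e, hax, hxe, hbe⟩
    by_cases hbx : b = x
    · exact ih r a x ha (hbx ▸ hb) hax
    by_cases hae : a = e
    · subst hae; exact hopp x a hxe hax
    -- P+ on (a, x, e, b) forces one of three adjacencies
    have h1 : ¬ (underlying A).Adj a e := by
      rintro ⟨-, h | h⟩
      · exact hTT3 ⟨a, x, e, hax, hxe, h⟩
      · exact hC3 ⟨x, e, a, hxe, h, hax⟩
    have h3 : ¬ (underlying A).Adj x b := by
      rintro ⟨-, h | h⟩
      · exact hTT3 ⟨x, b, e, h, hbe, hxe⟩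
      · exact hTT3 ⟨b, x, e, h, hxe, hbe⟩
    have h2 : ¬ (underlying A).Adj a b := by
      rintro ⟨-, h | h⟩
      · exact ih r a b ha hb h
      · exact ih r b a hb ha h
    exact hP4 ⟨a, x, e, b, hax, hxe, hbe, h1, h2, h3⟩

include hopp hC3 hTT3 hP4 in
/-- (T3): no vertex is reachable from a root in both `k` and `k+1` steps. -/
lemma keyT3 {k : ℕ} {r v : V} (h1 : Rk A k r v) (h2 : Rk A (k+1) r v) : False := by
  obtain ⟨y, hy, hyv⟩ := h2
  exact keyT hopp hC3 hTT3 hP4 k r y v hy h1 hyv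


include hopp hC3 hTT3 hP4 in
/-- NE-propagation: a nonadjacent pair at consecutive distances from a common
root propagates along out-arcs. -/
lemma NEprop {k : ℕ} {r u w x e : V} (hu : Rk A k r u) (hw : Rk A (k+1) r w)
    (hnadj : ¬ (underlying A).Adj u w) (hne : u ≠ w) (hux : A u x) (hwe : A w e) :
    x ≠ e ∧ ¬ (underlying A).Adj x e := by
  have hxk : Rk A (k+1) r x := ⟨u, hu, hux⟩
  have hek : Rk A (k+1+1) r e := ⟨w, hw, hwe⟩
  have hxe_ne : x ≠ e := by
    rintro rfl
    exact keyT3 hopp hC3 hTT3 hP4 hxk hek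
  have hue_ne : u ≠ e := by
    rintro rfl
    exact hnadj ((underlying A).adj_symm (arc_adj hopp hwe))
  have hxw_ne : x ≠ w := by
    rintro rfl
    exact hnadj (arc_adj hopp hux)
  have hnxw : ¬ (underlying A).Adj x w := by
    rintro ⟨-, h | h⟩
    · exact keyT hopp hC3 hTT3 hP4 (k+1) r x w hxk hw h
    · exact keyT hopp hC3 hTT3 hP4 (k+1) r w x hw hxk h
  refine ⟨hxe_ne, ?_⟩
  rintro ⟨-, harc | harc⟩
  · -- arc x → e
    have hnue : ¬ (underlying A).Adj u e := by
      rintro ⟨-, h | h⟩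
      · exact keyT3 hopp hC3 hTT3 hP4 (show Rk A (k+1) r e from ⟨u, hu, h⟩) hek
      · exact hC3 ⟨u, x, e, hux, harc, h⟩
    exact hP4 ⟨u, x, e, w, hux, harc, hwe, hnue, hnadj, hnxw⟩
  · -- arc e → x
    have hneu : ¬ (underlying A).Adj e u := by
      rintro ⟨-, h | h⟩
      · exact hTT3 ⟨e, u, x, h, hux, harc⟩
      · exact keyT3 hopp hC3 hTT3 hP4 (show Rk A (k+1) r e from ⟨u, hu, h⟩) hek
    exact hP4 ⟨w, e, x, u, hwe, harc, hux,
      (fun h => hnxw ((underlying A).adj_symm h)),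
      (fun h => hnadj ((underlying A).adj_symm h)), hneu⟩

include hopp hC3 hTT3 hP4 in
/-- Iterated NE-propagation. -/
lemma NEiter : ∀ (j k : ℕ) (r u w x e : V), Rk A k r u → Rk A (k+1) r w →
    ¬ (underlying A).Adj u w → u ≠ w → Rk A j u x → Rk A j w e →
    x ≠ e ∧ ¬ (underlying A).Adj x e := by
  intro j
  induction j with
  | zero => rintro k r u w x e hu hw hnadj hne rfl rfl; exact ⟨hne, hnadj⟩
  | succ j ih =>
    rintro k r u w x e hu hw hnadj hne ⟨x', hx', hx'x⟩ ⟨e', he', he'e⟩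
    have hx'r : Rk A (k+j) r x' := Rk_comp hu hx'
    have he'r : Rk A (k+j+1) r e' := by
      have := Rk_comp hw he'
      have harith : (k+1) + j = k + j + 1 := by omega
      exact harith ▸ this
    obtain ⟨hne', hnadj'⟩ := ih k r u w x' e' hu hw hnadj hne hx' he'
    exact NEprop hopp hC3 hTT3 hP4 hx'r he'r hnadj' hne' hx'x he'e

open scoped Classical

include hopp hC3 hTT3 hP4 in
/-- The hard structural lemma: a member graph with minimum degree ≥ 3 and no
neighborhood-containment pair has no directed path of length 2. -/
lemma hardLemma [Fintype V]
    (hdeg : ∀ v : V, 3 ≤ (Finset.univ.filter (fun z => (underlying A).Adj v z)).card)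
    (hcont : ∀ u v : V, u ≠ v → ∃ z, (underlying A).Adj u z ∧ ¬ (underlying A).Adj v z) :
    ¬ ∃ a b c : V, A a b ∧ A b c := by
  classical
  rintro ⟨a0, b0, c0, hab0, hbc0⟩
  -- every end of a 2-dipath has an out-arc
  have sinkfree : ∀ c : V, (∃ a b, A a b ∧ A b c) → ∃ y, A c y := by
    rintro c ⟨a, b, hab, hbc⟩
    by_contra hno
    push_neg at hno
    have hca : c ≠ a := (B1' hopp hC3 hTT3 hab hbc).symm
    obtain ⟨z, hz1, hz2⟩ := hcont c a hca
    have hzc : A z c := by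
      rcases hz1.2 with h | h
      · exact absurd h (hno z)
      · exact h
    by_cases hzb : z = b
    · subst hzb; exact hz2 (arc_adj hopp hab)
    · exact hz2 (R2 hopp hC3 hTT3 hP4 hab hbc hzc hzb).1
  -- the collection property for out-closed sets of 2-dipath-ends
  set P : Finset V → Prop := fun S => S.Nonempty ∧ (∀ v ∈ S, ∀ y, A v y → y ∈ S) ∧
      (∀ v ∈ S, ∃ a b, A a b ∧ A b v) with hP
  -- D itself satisfies P
  have hDP : P (Finset.univ.filter (fun c => ∃ a b, A a b ∧ A b c)) := by
    refine ⟨⟨c0, ?_⟩, ?_, ?_⟩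
    · simp only [Finset.mem_filter, Finset.mem_univ, true_and]
      exact ⟨a0, b0, hab0, hbc0⟩
    · intro v hv y hvy
      simp only [Finset.mem_filter, Finset.mem_univ, true_and] at hv ⊢
      obtain ⟨a, b, hab, hbv⟩ := hv
      exact ⟨b, v, hbv, hvy⟩
    · intro v hv
      simpa only [Finset.mem_filter, Finset.mem_univ, true_and] using hv
  -- a minimal set satisfying P
  have hmin : ∀ (n : ℕ) (S : Finset V), S.card ≤ n → P S →
      ∃ K, K ⊆ S ∧ P K ∧ ∀ K', K' ⊆ K → P K' → K' = K := by
    intro n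
    induction n with
    | zero =>
      intro S hc hPS
      exact absurd (Finset.card_eq_zero.mp (Nat.le_zero.mp hc) ▸ hPS.1)
        (by simp [Finset.not_nonempty_empty])
    | succ n ih =>
      intro S hc hPS
      by_cases hall : ∀ K', K' ⊆ S → P K' → K' = S
      · exact ⟨S, subset_rfl, hPS, hall⟩
      · push_neg at hall
        obtain ⟨K', hK'S, hPK', hK'ne⟩ := hall
        have hlt : K'.card < S.card := Finset.card_lt_card (ssubset_of_subset_of_ne hK'S hK'ne)
        obtain ⟨K, hKsub, hPK, hKmin⟩ := ih K' (by omega) hPK'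
        exact ⟨K, hKsub.trans hK'S, hPK, hKmin⟩
  obtain ⟨K, -, ⟨hKne, hKout, hKD⟩, hKmin⟩ :=
    hmin _ _ le_rfl hDP
  -- reachability within K
  have RkK : ∀ (j : ℕ) (x y : V), x ∈ K → Rk A j x y → y ∈ K := by
    intro j
    induction j with
    | zero => rintro x y hx rfl; exact hx
    | succ j ih => rintro x y hx ⟨z, hz, hzy⟩; exact hKout z (ih x z hx hz) y hzy
  have hreach : ∀ u ∈ K, ∀ v ∈ K, ∃ j, Rk A j u v := by
    intro u hu v hv
    have hRch : P (Finset.univ.filter (fun x => ∃ j, Rk A j u x)) := by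
      refine ⟨⟨u, ?_⟩, ?_, ?_⟩
      · simp only [Finset.mem_filter, Finset.mem_univ, true_and]
        exact ⟨0, rfl⟩
      · intro x hx y hxy
        simp only [Finset.mem_filter, Finset.mem_univ, true_and] at hx ⊢
        obtain ⟨j, hj⟩ := hx
        exact ⟨j+1, x, hj, hxy⟩
      · intro x hx
        simp only [Finset.mem_filter, Finset.mem_univ, true_and] at hx
        obtain ⟨j, hj⟩ := hx
        exact hKD x (RkK j u x hu hj)
    have hsub : (Finset.univ.filter (fun x => ∃ j, Rk A j u x)) ⊆ K := by
      intro x hx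
      simp only [Finset.mem_filter, Finset.mem_univ, true_and] at hx
      obtain ⟨j, hj⟩ := hx
      exact RkK j u x hu hj
    have := hKmin _ hsub hRch
    have hv' : v ∈ (Finset.univ.filter (fun x => ∃ j, Rk A j u x)) := this ▸ hv
    simpa only [Finset.mem_filter, Finset.mem_univ, true_and] using hv'
  -- endgame machine
  have endgame : ∀ (r u₀ w₀ : V), r ∈ K → u₀ ∈ K → w₀ ∈ K → ∀ k : ℕ,
      Rk A k r u₀ → Rk A (k+1) r w₀ → u₀ ≠ w₀ → ¬ (underlying A).Adj u₀ w₀ → False := by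
    intro r u₀ w₀ hr hu₀ hw₀ k hk hk1 hne₀ hnadj₀
    obtain ⟨ρ, hρ⟩ := hreach u₀ hu₀ r hr
    obtain ⟨m, hm⟩ := hreach w₀ hw₀ u₀ hu₀
    obtain ⟨h, hh⟩ := sinkfree u₀ (hKD u₀ hu₀)
    have W1 : Rk A (ρ + (k+1) + m) u₀ u₀ := Rk_comp (Rk_comp hρ hk1) hm
    have W2 : Rk A (m + ρ + k + 1) w₀ h :=
      ⟨u₀, Rk_comp (Rk_comp hm hρ) hk, hh⟩
    have heq : ρ + (k+1) + m = m + ρ + k + 1 := by omega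
    have W1' : Rk A (m + ρ + k + 1) u₀ u₀ := heq ▸ W1
    obtain ⟨-, hnadjF⟩ := NEiter hopp hC3 hTT3 hP4 (m + ρ + k + 1) k r u₀ w₀ u₀ h
      hk hk1 hnadj₀ hne₀ W1' W2
    exact hnadjF (arc_adj hopp hh)
  -- main case split
  by_cases hcase : ∃ c u v : V, c ∈ K ∧ u ∈ K ∧ v ∈ K ∧ u ≠ v ∧ A u c ∧ A v c
  · -- CASE YES
    obtain ⟨c, u, v, hcK, huK, hvK, huv, huc, hvc⟩ := hcase
    have hnadjuv : ¬ (underlying A).Adj u v := B3 hTT3 huc hvc huv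
    -- e₀
    obtain ⟨e₀, he₀1, he₀2⟩ := hcont u v huv
    have hue₀ : A u e₀ := by
      rcases he₀1.2 with h | h
      · exact h
      · exact absurd ((underlying A).adj_symm (R2 hopp hC3 hTT3 hP4 h huc hvc huv.symm).1) he₀2
    have he₀K : e₀ ∈ K := hKout u huK e₀ hue₀
    have he₀v : e₀ ≠ v := by rintro rfl; exact hnadjuv he₀1
    -- f₀
    obtain ⟨f₀, hf₀1, hf₀2⟩ := hcont v u huv.symm
    have hvf₀ : A v f₀ := by
      rcases hf₀1.2 with h | h
      · exact h
      · exact absurd ((underlying A).adj_symm (R2 hopp hC3 hTT3 hP4 h hvc huc huv).1) hf₀2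
    have hf₀K : f₀ ∈ K := hKout v hvK f₀ hvf₀
    have hf₀u : f₀ ≠ u := by rintro rfl; exact hnadjuv ((underlying A).adj_symm hf₀1)
    -- an in-neighbour of u inside K
    have hgetin : ∀ w ∈ K, A w c → ∃ z ∈ K, A z w := by
      intro w hwK hwc
      obtain ⟨j, hj⟩ := hreach c hcK w hwK
      match j, hj with
      | 0, hj => exact absurd (hj ▸ hwc) (fun h => arc_ne hopp h rfl)
      | (j+1), ⟨z, hz, hzw⟩ => exact ⟨z, RkK j c z hcK hz, hzw⟩
    obtain ⟨a, haK, hau⟩ := hgetin u huK huc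
    obtain ⟨b', hb'K, hb'v⟩ := hgetin v hvK hvc
    have hAdjav := R2 hopp hC3 hTT3 hP4 hau huc hvc huv.symm
    have hAdjb'u := R2 hopp hC3 hTT3 hP4 hb'v hvc huc huv
    rcases hAdjav.1.2 with hav | hva
    · -- seed (v, e₀) with root a
      exact endgame a v e₀ haK hvK he₀K 1 ⟨a, rfl, hav⟩ ⟨u, ⟨a, rfl, hau⟩, hue₀⟩
        he₀v.symm he₀2
    · rcases hAdjb'u.1.2 with hb'u | hub'
      · -- seed (u, f₀) with root b'
        exact endgame b' u f₀ hb'K huK hf₀K 1 ⟨b', rfl, hb'u⟩ ⟨v, ⟨b', rfl, hb'v⟩, hvf₀⟩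
          hf₀u.symm hf₀2
      · -- seed (f₀, u) with root v
        exact endgame v f₀ u hvK hf₀K huK 1 ⟨v, rfl, hvf₀⟩ ⟨a, ⟨v, rfl, hva⟩, hau⟩
          hf₀u (fun h => hf₀2 ((underlying A).adj_symm h))
  · -- CASE NO: unique in-K in-neighbours
    have hUniq : ∀ c u v : V, c ∈ K → u ∈ K → v ∈ K → A u c → A v c → u = v := by
      intro c u v hc hu hv huc hvc
      by_contra hne
      exact hcase ⟨c, u, v, hc, hu, hv, hne, huc, hvc⟩
    -- the out-map on K
    have hout : ∀ x : {x : V // x ∈ K}, ∃ y : {x : V // x ∈ K}, A x.1 y.1 := by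
      intro x
      obtain ⟨y, hy⟩ := sinkfree x.1 (hKD x.1 x.2)
      exact ⟨⟨y, hKout x.1 x.2 y hy⟩, hy⟩
    choose g hg using hout
    have hginj : Function.Injective g := by
      intro x₁ x₂ hgx
      have h1 := hg x₁
      have h2 := hg x₂
      rw [hgx] at h1
      exact Subtype.ext (hUniq (g x₂).1 x₁.1 x₂.1 (g x₂).2 x₁.2 x₂.2 h1 h2)
    have hgsurj : Function.Surjective g := Finite.surjective_of_injective hginj
    -- each vertex of K has a unique out-neighbour
    have houtuniq : ∀ (x : {x : V // x ∈ K}) (z : V), A x.1 z → z = (g x).1 := by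
      intro x z hz
      have hzK : z ∈ K := hKout x.1 x.2 z hz
      obtain ⟨y, hy⟩ := hgsurj ⟨z, hzK⟩
      have : A y.1 z := by have := hg y; rw [hy] at this; exact this
      have hxy : y = x := Subtype.ext (hUniq z y.1 x.1 hzK y.2 x.2 this hz)
      rw [← hxy]
      exact (congrArg Subtype.val hy).symm
    -- pick c ∈ K and its in-neighbour b
    obtain ⟨c, hcK⟩ := hKne
    obtain ⟨b, hbc⟩ := hgsurj ⟨c, hcK⟩
    have hbc' : A b.1 c := by have := hg b; rw [hbc] at this; exact this
    -- find a second in-neighbour d of c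
    have hd : ∃ d : V, A d c ∧ d ≠ b.1 := by
      by_contra hnd
      push_neg at hnd
      have hsub : (Finset.univ.filter (fun z => (underlying A).Adj c z)) ⊆
          {(g ⟨c, hcK⟩).1, b.1} := by
        intro z hz
        simp only [Finset.mem_filter, Finset.mem_univ, true_and] at hz
        rcases hz.2 with h | h
        · exact Finset.mem_insert.mpr (Or.inl (houtuniq ⟨c, hcK⟩ z h))
        · exact Finset.mem_insert.mpr (Or.inr (Finset.mem_singleton.mpr (hnd z h)))
      have := (hdeg c).trans (Finset.card_le_card hsub)
      have h2 : ({(g ⟨c, hcK⟩).1, b.1} : Finset V).card ≤ 2 :=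
        (Finset.card_insert_le _ _).trans (by simp)
      omega
    obtain ⟨d, hdc, hdb⟩ := hd
    -- containment N(b) ⊆ N(d): contradiction
    obtain ⟨z, hz1, hz2⟩ := hcont b.1 d (fun h => hdb (h.symm))
    rcases hz1.2 with h | h
    · -- z is the unique out-neighbour of b, i.e. z = c
      have : z = (g b).1 := houtuniq b z h
      rw [hbc] at this
      subst this
      exact hz2 (arc_adj hopp hdc)
    · -- z → b, use R2
      exact hz2 ((underlying A).adj_symm (R2 hopp hC3 hTT3 hP4 h hbc' hdc hdb).1)

end Core

section MainInduction
open scoped Classical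

lemma adj_transfer {V : Type} {A : V → V → Prop} {p : V → Prop}
    {x y : {w : V // p w}} :
    (underlying (fun a b : {w : V // p w} => A a.1 b.1)).Adj x y ↔ (underlying A).Adj x.1 y.1 := by
  constructor
  · rintro ⟨h1, h2⟩
    exact ⟨fun hh => h1 (Subtype.ext hh), h2⟩
  · rintro ⟨h1, h2⟩
    exact ⟨fun hh => h1 (congrArg Subtype.val hh), h2⟩

lemma mainColor : ∀ (n : ℕ) (V : Type) [Fintype V] (A : V → V → Prop),
    (∀ x y, A x y → ¬ A y x) →
    (¬ ∃ u v w : V, A u v ∧ A v w ∧ A w u) →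
    (¬ ∃ u v w : V, A u v ∧ A v w ∧ A u w) →
    (¬ ∃ a b c d : V, A a b ∧ A b c ∧ A d c ∧
        ¬ (underlying A).Adj a c ∧ ¬ (underlying A).Adj a d ∧
        ¬ (underlying A).Adj b d) →
    Fintype.card V ≤ n → (underlying A).Colorable 3 := by
  intro n
  induction n with
  | zero =>
    intro V _ A _ _ _ _ hcard
    have : IsEmpty V := Fintype.card_eq_zero_iff.mp (Nat.le_zero.mp hcard)
    exact ⟨SimpleGraph.Coloring.mk isEmptyElim (fun {v} => isEmptyElim v)⟩
  | succ n ih =>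
    intro V _ A hopp hC3 hTT3 hP4 hcard
    by_cases hsmall : ∃ v : V,
        (Finset.univ.filter (fun z => (underlying A).Adj v z)).card ≤ 2
    · -- delete a vertex of degree ≤ 2
      obtain ⟨v, hv⟩ := hsmall
      have hcard' : Fintype.card {w : V // w ≠ v} ≤ n := by
        have h1 : Fintype.card {w : V // w ≠ v} < Fintype.card V :=
          Fintype.card_subtype_lt (x := v) (by simp)
        omega
      obtain ⟨C⟩ := ih {w : V // w ≠ v} (fun x y => A x.1 y.1)
        (fun x y h => hopp x.1 y.1 h)
        (fun ⟨u', v', w', h1, h2, h3⟩ => hC3 ⟨u'.1, v'.1, w'.1, h1, h2, h3⟩)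
        (fun ⟨u', v', w', h1, h2, h3⟩ => hTT3 ⟨u'.1, v'.1, w'.1, h1, h2, h3⟩)
        (fun ⟨a, b, c, d, h1, h2, h3, h4, h5, h6⟩ => hP4 ⟨a.1, b.1, c.1, d.1, h1, h2, h3,
          fun hh => h4 (adj_transfer.mpr hh),
          fun hh => h5 (adj_transfer.mpr hh),
          fun hh => h6 (adj_transfer.mpr hh)⟩)
        hcard'
      have hc₀ : ∃ c₀ : Fin 3, ∀ (z : V) (hz : (underlying A).Adj v z),
          C ⟨z, hz.ne'⟩ ≠ c₀ := by
        by_contra hall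
        push_neg at hall
        have hinj : ∀ c₀ : Fin 3, c₀ ∈ (Finset.univ.filter
            (fun z => (underlying A).Adj v z)).attach.image
            (fun z => C ⟨z.1, ((Finset.mem_filter.mp z.2).2).ne'⟩) := by
          intro c₀
          obtain ⟨z, hz, heq⟩ := hall c₀
          exact Finset.mem_image.mpr ⟨⟨z, Finset.mem_filter.mpr ⟨Finset.mem_univ _, hz⟩⟩,
            Finset.mem_attach _ _, heq⟩
        have hsubs : (Finset.univ : Finset (Fin 3)) ⊆ _ := fun c _ => hinj c
        have h2 := (Finset.card_le_card hsubs).trans Finset.card_image_le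
        rw [Finset.card_attach] at h2
        simp only [Finset.card_univ, Fintype.card_fin] at h2
        omega
      obtain ⟨c₀, hc₀⟩ := hc₀
      refine ⟨SimpleGraph.Coloring.mk
        (fun w => if h : w = v then c₀ else C ⟨w, h⟩) ?_⟩
      intro x y hxy
      by_cases hx : x = v
      · have hy : y ≠ v := by rw [← hx]; exact hxy.ne'
        have hvy : (underlying A).Adj v y := hx ▸ hxy
        simp only [dif_pos hx, dif_neg hy]
        exact fun heq => hc₀ y hvy (by
          convert heq.symm using 2)
      · by_cases hy : y = v
        · have hvx : (underlying A).Adj v x := hy ▸ ((underlying A).adj_symm hxy)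
          simp only [dif_pos hy, dif_neg hx]
          exact fun heq => hc₀ x hvx (by convert heq using 2)
        · simp only [dif_neg hx, dif_neg hy]
          exact C.valid ((adj_transfer (x := ⟨x, hx⟩) (y := ⟨y, hy⟩)).mpr hxy)
    · by_cases hpair : ∃ u v : V, u ≠ v ∧
          ∀ z, (underlying A).Adj u z → (underlying A).Adj v z
      · -- delete a dominated vertex
        obtain ⟨u, v, huv, hsub⟩ := hpair
        have hcard' : Fintype.card {w : V // w ≠ u} ≤ n := by
          have h1 : Fintype.card {w : V // w ≠ u} < Fintype.card V :=
            Fintype.card_subtype_lt (x := u) (by simp)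
          omega
        obtain ⟨C⟩ := ih {w : V // w ≠ u} (fun x y => A x.1 y.1)
          (fun x y h => hopp x.1 y.1 h)
          (fun ⟨u', v', w', h1, h2, h3⟩ => hC3 ⟨u'.1, v'.1, w'.1, h1, h2, h3⟩)
          (fun ⟨u', v', w', h1, h2, h3⟩ => hTT3 ⟨u'.1, v'.1, w'.1, h1, h2, h3⟩)
          (fun ⟨a, b, c, d, h1, h2, h3, h4, h5, h6⟩ => hP4 ⟨a.1, b.1, c.1, d.1, h1, h2, h3,
            fun hh => h4 (adj_transfer.mpr hh),
            fun hh => h5 (adj_transfer.mpr hh),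
            fun hh => h6 (adj_transfer.mpr hh)⟩)
          hcard'
        have hvu : v ≠ u := huv.symm
        refine ⟨SimpleGraph.Coloring.mk
          (fun w => if h : w = u then C ⟨v, hvu⟩ else C ⟨w, h⟩) ?_⟩
        intro x y hxy
        by_cases hx : x = u
        · have hy : y ≠ u := by rw [← hx]; exact hxy.ne'
          have hvy : (underlying A).Adj v y := hsub y (hx ▸ hxy)
          simp only [dif_pos hx, dif_neg hy]
          exact C.valid ((adj_transfer (x := ⟨v, hvu⟩) (y := ⟨y, hy⟩)).mpr hvy)
        · by_cases hy : y = u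
          · have hvx : (underlying A).Adj v x := hsub x (hy ▸ ((underlying A).adj_symm hxy))
            simp only [dif_pos hy, dif_neg hx]
            exact fun heq =>
              (C.valid ((adj_transfer (x := ⟨v, hvu⟩) (y := ⟨x, hx⟩)).mpr hvx)) heq.symm
          · simp only [dif_neg hx, dif_neg hy]
            exact C.valid ((adj_transfer (x := ⟨x, hx⟩) (y := ⟨y, hy⟩)).mpr hxy)
      · -- no reduction: min degree ≥ 3 and no containment, so no 2-dipath
        push_neg at hsmall hpair
        have hdeg : ∀ v : V, 3 ≤ (Finset.univ.filter
            (fun z => (underlying A).Adj v z)).card := by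
          intro v; have := hsmall v; omega
        have hnd := hardLemma hopp hC3 hTT3 hP4 hdeg hpair
        refine ⟨SimpleGraph.Coloring.mk
          (fun w => if h : ∃ z, A z w then (1 : Fin 3) else 0) ?_⟩
        rintro x y ⟨hne, harc | harc⟩
        · have hyin : ∃ z, A z y := ⟨x, harc⟩
          have hxnin : ¬ ∃ z, A z x := by
            rintro ⟨z, hz⟩
            exact hnd ⟨z, x, y, hz, harc⟩
          simp only [dif_pos hyin, dif_neg hxnin]
          decide
        · have hxin : ∃ z, A z x := ⟨y, harc⟩
          have hynin : ¬ ∃ z, A z y := by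
            rintro ⟨z, hz⟩
            exact hnd ⟨z, y, x, hz, harc⟩
          simp only [dif_pos hxin, dif_neg hynin]
          decide

end MainInduction

section Witness

def A5 : ZMod 5 → ZMod 5 → Prop := fun x y => y = x + 1

lemma wit_opp : ∀ x y : ZMod 5, A5 x y → ¬ A5 y x :=
  show ∀ x y : ZMod 5, y = x + 1 → ¬ (x = y + 1) by decide

lemma wit_C3 : ¬ ∃ u v w : ZMod 5, A5 u v ∧ A5 v w ∧ A5 w u :=
  show ¬ ∃ u v w : ZMod 5, v = u + 1 ∧ w = v + 1 ∧ u = w + 1 by decide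

lemma wit_TT3 : ¬ ∃ u v w : ZMod 5, A5 u v ∧ A5 v w ∧ A5 u w :=
  show ¬ ∃ u v w : ZMod 5, v = u + 1 ∧ w = v + 1 ∧ w = u + 1 by decide

lemma wit_P4 : ¬ ∃ a b c d : ZMod 5, A5 a b ∧ A5 b c ∧ A5 d c ∧
    ¬ (underlying A5).Adj a c ∧ ¬ (underlying A5).Adj a d ∧
    ¬ (underlying A5).Adj b d := by
  rintro ⟨a, b, c, d, h1, h2, h3, -, h5, -⟩
  have hdb : d = b := by
    have : d + 1 = b + 1 := by rw [← h2, ← h3]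
    exact add_right_cancel this
  subst hdb
  apply h5
  refine ⟨?_, Or.inl h1⟩
  rw [h1]
  have : ∀ t : ZMod 5, t ≠ t + 1 := by decide
  exact this a

lemma wit_col : (underlying A5).Colorable 3 := by
  have hval : ∀ x y : ZMod 5, x ≠ y → (y = x + 1 ∨ x = y + 1) →
      (fun t : ZMod 5 => if t = 0 ∨ t = 2 then (0 : Fin 3) else if t = 1 ∨ t = 3 then 1 else 2) x ≠
      (fun t : ZMod 5 => if t = 0 ∨ t = 2 then (0 : Fin 3) else if t = 1 ∨ t = 3 then 1 else 2) y := by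
    decide
  exact ⟨SimpleGraph.Coloring.mk _ (fun {x y} h => hval x y h.1 h.2)⟩

lemma wit_not2 : ¬ (underlying A5).Colorable 2 := by
  rintro ⟨C⟩
  have key : ∀ a b c : Fin 2, a ≠ b → b ≠ c → a = c := by decide
  have hne : ∀ x : ZMod 5, x ≠ x + 1 := by decide
  have hAdj : ∀ x : ZMod 5, (underlying A5).Adj x (x + 1) := fun x => ⟨hne x, Or.inl rfl⟩
  have h01 := C.valid (hAdj 0)
  have h12 := C.valid (hAdj (0+1))
  have h23 := C.valid (hAdj (0+1+1))
  have h34 := C.valid (hAdj (0+1+1+1))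
  have h40 := C.valid (hAdj (0+1+1+1+1))
  have hzero : (0+1+1+1+1+1 : ZMod 5) = 0 := by decide
  rw [hzero] at h40
  exact h40 ((key _ _ _ h01 h12).trans (key _ _ _ h23 h34)).symm

lemma wit_chrom : (underlying A5).chromaticNumber = 3 := by
  have hle : (underlying A5).chromaticNumber ≤ 3 := by
    have := wit_col.chromaticNumber_le
    norm_num at this ⊢
    exact this
  have hge : 3 ≤ (underlying A5).chromaticNumber := by
    by_contra hc
    have h3 : (underlying A5).chromaticNumber ≤ ((2:ℕ) : ℕ∞) := by
      have := not_le.mp hc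
      exact Order.le_of_lt_add_one (by norm_num; exact this)
    exact wit_not2 (SimpleGraph.chromaticNumber_le_iff_colorable.mp h3)
  exact le_antisymm hle hge

end Witness


theorem stmt14 :
    (∀ (V : Type) [Fintype V] (A : V → V → Prop),
      (∀ x y, A x y → ¬ A y x) →
      (¬ ∃ u v w : V, A u v ∧ A v w ∧ A w u) →
      (¬ ∃ u v w : V, A u v ∧ A v w ∧ A u w) →
      (¬ ∃ a b c d : V, A a b ∧ A b c ∧ A d c ∧
        ¬ (underlying A).Adj a c ∧ ¬ (underlying A).Adj a d ∧
        ¬ (underlying A).Adj b d) →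
      (underlying A).chromaticNumber ≤ 3) ∧
    (∃ (V : Type) (_ : Fintype V) (A : V → V → Prop),
      (∀ x y, A x y → ¬ A y x) ∧
      (¬ ∃ u v w : V, A u v ∧ A v w ∧ A w u) ∧
      (¬ ∃ u v w : V, A u v ∧ A v w ∧ A u w) ∧
      (¬ ∃ a b c d : V, A a b ∧ A b c ∧ A d c ∧
        ¬ (underlying A).Adj a c ∧ ¬ (underlying A).Adj a d ∧
        ¬ (underlying A).Adj b d) ∧
      (underlying A).chromaticNumber = 3) := by
  constructor
  · intro V _ A hopp hC3 hTT3 hP4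
    have hcol := mainColor (Fintype.card V) V A hopp hC3 hTT3 hP4 le_rfl
    have := hcol.chromaticNumber_le
    norm_num at this ⊢
    exact this
  · exact ⟨ZMod 5, inferInstance, A5, wit_opp, wit_C3, wit_TT3, wit_P4, wit_chrom⟩
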